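/- Let F = (a_{i,j}) be a tame SL_k-frieze over a field, and let F̂ be the dual array defined by replacing each entry a_{i,j} with the adjacent (k−1)×(k−1) minor D_{i,j}^{k−1}. Then F is generic (all its adjacent (k−1)×(k−1) minors relevant to the frieze are nonzero) if and only if F is nonzero (all interior entries c_{i,j} are nonzero). -/

import Mathlib

namespace TGIN

open Matrix

variable {K : Type*} [Field K]

def blk (a : ℤ → ℤ → K) (κ : ℕ) (p q : ℤ) : Matrix (Fin κ) (Fin κ) K :=
  Matrix.of fun r s : Fin κ => a (p + (r : ℤ)) (q + (s : ℤ))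

lemma vecMul_cancel {κ : ℕ} (P : Matrix (Fin κ) (Fin κ) K) (hP : IsUnit P.det)
    {x y : Fin κ → K} (h : Matrix.vecMul x P = Matrix.vecMul y P) : x = y := by
  have h2 := congrArg (fun v => Matrix.vecMul v P⁻¹) h
  simpa [Matrix.vecMul_vecMul, Matrix.mul_nonsing_inv P hP] using h2


lemma vecMul_eq_sum' {κ : ℕ} (P : Matrix (Fin κ) (Fin κ) K) (y : Fin κ → K) :
    Matrix.vecMul y P = ∑ r, y r • P r := by
  funext s
  simp [Matrix.vecMul, dotProduct, Finset.sum_apply]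

lemma ext_on_rows {κ : ℕ} (P : Matrix (Fin κ) (Fin κ) K) (hP : IsUnit P.det)
    (f g : (Fin κ → K) →ₗ[K] K) (h : ∀ r, f (P r) = g (P r)) (x : Fin κ → K) :
    f x = g x := by
  have hx : x = ∑ r, (Matrix.vecMul x P⁻¹) r • P r := by
    rw [← vecMul_eq_sum', Matrix.vecMul_vecMul, Matrix.nonsing_inv_mul P hP,
      Matrix.vecMul_one]
  rw [hx, map_sum, map_sum]
  exact Finset.sum_congr rfl fun r _ => by
    rw [_root_.map_smul, _root_.map_smul, h r]

section RowRec

variable (m n : ℕ) (a : ℤ → ℤ → K)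
  (hSL : ∀ p q : ℤ, (blk a (m+1) p q).det = 1)
  (htame : ∀ p q : ℤ, (blk a (m+2) p q).det = 0)

/-- zero band -/
lemma band
    (hzero : ∀ i j : ℤ, i + ((n : ℤ) + 1) < j → j < i + ((n : ℤ) + (m : ℤ) + 2) → a i j = 0)
    (hext : ∀ i j : ℤ, a i (j + ((n : ℤ) + (m : ℤ) + 2)) = (-1 : K) ^ m * a i j)
    (p t : ℤ) (h1 : 1 ≤ t) (h2 : t ≤ m) : a p (p - t) = 0 := by
  have he := hext p (p - t)
  have hz : a p (p - t + ((n : ℤ) + (m : ℤ) + 2)) = 0 := by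
    apply hzero <;> omega
  rw [hz] at he
  rcases mul_eq_zero.mp he.symm with h | h
  · exact absurd h (pow_ne_zero _ (by norm_num))
  · exact h

lemma corner
    (hone' : ∀ i : ℤ, a i (i + ((n : ℤ) + 1)) = 1)
    (hext : ∀ i j : ℤ, a i (j + ((n : ℤ) + (m : ℤ) + 2)) = (-1 : K) ^ m * a i j)
    (p : ℤ) : a p (p - ((m : ℤ) + 1)) = (-1 : K) ^ m := by
  have he := hext p (p - ((m : ℤ) + 1))
  have harg : p - ((m : ℤ) + 1) + ((n : ℤ) + (m : ℤ) + 2) = p + ((n : ℤ) + 1) := by ring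
  rw [harg, hone' p] at he
  have hsq : ((-1 : K) ^ m) * ((-1 : K) ^ m) = 1 := by
    rw [← pow_add]
    exact Even.neg_one_pow ⟨m, rfl⟩
  calc a p (p - ((m : ℤ) + 1)) = ((-1:K)^m * (-1:K)^m) * a p (p - ((m : ℤ) + 1)) := by
        rw [hsq, one_mul]
    _ = (-1:K)^m * ((-1:K)^m * a p (p - ((m : ℤ) + 1))) := by ring
    _ = (-1:K)^m := by rw [← he, mul_one]


include hSL htame in
lemma rowUp (p : ℤ) :
    ∃ μ : Fin (m+1) → K, ∀ c : ℤ, a (p + ((m : ℤ) + 1)) c = ∑ t, μ t * a (p + (t : ℤ)) c := by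
  classical
  -- the "solution at window q" predicate
  set Sol : ℤ → (Fin (m+1) → K) → Prop := fun q μ =>
    ∀ s : Fin (m+2), a (p + ((m : ℤ) + 1)) (q + (s : ℤ)) =
      ∑ t, μ t * a (p + (t : ℤ)) (q + (s : ℤ)) with hSol
  have step1 : ∀ q : ℤ, ∃ μ, Sol q μ := by
    intro q
    obtain ⟨v, hv0, hv⟩ := (Matrix.exists_vecMul_eq_zero_iff).2 (htame p q)
    have hvs : ∀ s : Fin (m+2), ∑ r, v r * a (p + (r : ℤ)) (q + (s : ℤ)) = 0 := by
      intro s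
      have := congrFun hv s
      simpa [Matrix.vecMul, dotProduct, blk] using this
    have hlast : v (Fin.last (m+1)) ≠ 0 := by
      intro h0
      apply hv0
      have hv' : Matrix.vecMul (v ∘ Fin.castSucc) (blk a (m+1) p q) = 0 := by
        funext s
        have h1 := hvs s.castSucc
        rw [Fin.sum_univ_castSucc, h0, zero_mul, add_zero] at h1
        simpa [Matrix.vecMul, dotProduct, blk, Fin.coe_castSucc] using h1
      have hz : (v ∘ Fin.castSucc) = 0 := by
        apply vecMul_cancel (blk a (m+1) p q) (by rw [hSL p q]; exact isUnit_one)
        rw [hv', Matrix.zero_vecMul]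
      funext r
      refine Fin.lastCases h0 (fun r' => ?_) r
      exact congrFun hz r'
    set w := v (Fin.last (m+1)) with hw
    refine ⟨fun t => -(w⁻¹) * v t.castSucc, ?_⟩
    intro s
    have h1 := hvs s
    rw [Fin.sum_univ_castSucc] at h1
    simp only [Fin.coe_castSucc, Fin.val_last] at h1
    push_cast at h1
    -- h1 : S + w * A = 0
    have hA : a (p + ((m : ℤ) + 1)) (q + (s : ℤ)) =
        -(w⁻¹) * ∑ t : Fin (m+1), v t.castSucc * a (p + (t : ℤ)) (q + (s : ℤ)) := by
      apply mul_left_cancel₀ hlast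
      have haux : w * (-(w⁻¹) * ∑ t : Fin (m+1),
          v t.castSucc * a (p + (t : ℤ)) (q + (s : ℤ))) =
          -∑ t : Fin (m+1), v t.castSucc * a (p + (t : ℤ)) (q + (s : ℤ)) := by
        field_simp
      rw [haux]
      linear_combination h1
    rw [hA, Finset.mul_sum]
    exact Finset.sum_congr rfl fun t _ => by ring
  have step2 : ∀ q μ₁ μ₂, Sol q μ₁ → Sol (q+1) μ₂ → μ₁ = μ₂ := by
    intro q μ₁ μ₂ h₁ h₂
    apply vecMul_cancel (blk a (m+1) p (q+1)) (by rw [hSL p (q+1)]; exact isUnit_one)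
    funext s
    have e1 : q + ((s.succ : Fin (m+2)) : ℤ) = (q + 1) + (s : ℤ) := by
      simp [Fin.val_succ]; push_cast; ring
    have c1 := h₁ s.succ
    rw [e1] at c1
    have c2 := h₂ s.castSucc
    have e2 : ((s.castSucc : Fin (m+2)) : ℤ) = (s : ℤ) := by simp [Fin.coe_castSucc]
    rw [e2] at c2
    have : ∑ t, μ₁ t * a (p + (t : ℤ)) ((q+1) + (s : ℤ)) =
        ∑ t, μ₂ t * a (p + (t : ℤ)) ((q+1) + (s : ℤ)) := by
      rw [← c1]
      convert c2 using 2
      all_goals simp [Fin.val_succ, Fin.coe_castSucc]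
    simpa [Matrix.vecMul, dotProduct, blk] using this
  choose f hf using step1
  have hconst : ∀ q : ℤ, f q = f 0 := by
    intro q
    induction q using Int.induction_on with
    | zero => rfl
    | succ q ih => exact (step2 q _ _ (hf q) (hf (q+1))).symm.trans ih
    | pred q ih =>
        have e : (-(q : ℤ) - 1) + 1 = -q := by ring
        refine (step2 (-(q:ℤ)-1) _ _ (hf _) ?_).trans ih
        rw [e]
        exact hf _
  refine ⟨f 0, fun c => ?_⟩
  have h := hf c 0
  rw [hconst c] at h
  simpa using h

include hSL htame in
lemma rowDown (p : ℤ) :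
    ∃ ν : Fin (m+1) → K, ∀ c : ℤ, a p c = ∑ t, ν t * a (p + 1 + (t : ℤ)) c := by
  classical
  set Sol : ℤ → (Fin (m+1) → K) → Prop := fun q ν =>
    ∀ s : Fin (m+2), a p (q + (s : ℤ)) =
      ∑ t, ν t * a (p + 1 + (t : ℤ)) (q + (s : ℤ)) with hSol
  have step1 : ∀ q : ℤ, ∃ ν, Sol q ν := by
    intro q
    obtain ⟨v, hv0, hv⟩ := (Matrix.exists_vecMul_eq_zero_iff).2 (htame p q)
    have hvs : ∀ s : Fin (m+2), ∑ r, v r * a (p + (r : ℤ)) (q + (s : ℤ)) = 0 := by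
      intro s
      have := congrFun hv s
      simpa [Matrix.vecMul, dotProduct, blk] using this
    have hsuccstep : ∀ (r : Fin (m+1)) (x : ℤ), p + ((r.succ : Fin (m+2)) : ℤ) = p + 1 + (r : ℤ) := by
      intro r x
      simp [Fin.val_succ]
      push_cast
      ring
    have hfirst : v 0 ≠ 0 := by
      intro h0
      apply hv0
      have hv' : Matrix.vecMul (v ∘ Fin.succ) (blk a (m+1) (p+1) q) = 0 := by
        funext s
        have h1 := hvs s.castSucc
        rw [Fin.sum_univ_succ, h0, zero_mul, zero_add] at h1
        simp only [Fin.coe_castSucc] at h1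
        have h2 : ∑ r : Fin (m+1), v r.succ * a (p + 1 + (r : ℤ)) (q + (s : ℤ)) = 0 := by
          rw [← h1]
          exact Finset.sum_congr rfl fun r _ => by rw [hsuccstep r 0]
        simpa [Matrix.vecMul, dotProduct, blk] using h2
      have hz : (v ∘ Fin.succ) = 0 := by
        apply vecMul_cancel (blk a (m+1) (p+1) q) (by rw [hSL (p+1) q]; exact isUnit_one)
        rw [hv', Matrix.zero_vecMul]
      funext r
      refine Fin.cases h0 (fun r' => ?_) r
      exact congrFun hz r'
    set w := v 0 with hw
    refine ⟨fun t => -(w⁻¹) * v t.succ, ?_⟩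
    intro s
    have h1 := hvs s
    rw [Fin.sum_univ_succ] at h1
    simp only [Fin.val_zero, Nat.cast_zero, add_zero] at h1
    have h1' : (∑ t : Fin (m+1), v t.succ * a (p + 1 + (t : ℤ)) (q + (s : ℤ)))
        + w * a p (q + (s : ℤ)) = 0 := by
      rw [← h1]
      have : ∑ t : Fin (m+1), v t.succ * a (p + 1 + (t : ℤ)) (q + (s : ℤ)) =
          ∑ t : Fin (m+1), v t.succ * a (p + ((t.succ : Fin (m+2)) : ℤ)) (q + (s : ℤ)) :=
        Finset.sum_congr rfl fun r _ => by rw [hsuccstep r 0]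
      rw [this]
      ring
    have hA : a p (q + (s : ℤ)) =
        -(w⁻¹) * ∑ t : Fin (m+1), v t.succ * a (p + 1 + (t : ℤ)) (q + (s : ℤ)) := by
      apply mul_left_cancel₀ hfirst
      have haux : w * (-(w⁻¹) * ∑ t : Fin (m+1),
          v t.succ * a (p + 1 + (t : ℤ)) (q + (s : ℤ))) =
          -∑ t : Fin (m+1), v t.succ * a (p + 1 + (t : ℤ)) (q + (s : ℤ)) := by
        field_simp
      rw [haux]
      linear_combination h1'
    rw [hA, Finset.mul_sum]
    exact Finset.sum_congr rfl fun t _ => by ring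
  have step2 : ∀ q ν₁ ν₂, Sol q ν₁ → Sol (q+1) ν₂ → ν₁ = ν₂ := by
    intro q ν₁ ν₂ h₁ h₂
    apply vecMul_cancel (blk a (m+1) (p+1) (q+1)) (by rw [hSL (p+1) (q+1)]; exact isUnit_one)
    funext s
    have e1 : q + ((s.succ : Fin (m+2)) : ℤ) = (q + 1) + (s : ℤ) := by
      simp [Fin.val_succ]; push_cast; ring
    have c1 := h₁ s.succ
    rw [e1] at c1
    have c2 := h₂ s.castSucc
    have e2 : ((s.castSucc : Fin (m+2)) : ℤ) = (s : ℤ) := by simp [Fin.coe_castSucc]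
    rw [e2] at c2
    have : ∑ t, ν₁ t * a (p + 1 + (t : ℤ)) ((q+1) + (s : ℤ)) =
        ∑ t, ν₂ t * a (p + 1 + (t : ℤ)) ((q+1) + (s : ℤ)) := by
      rw [← c1, ← c2]
    simpa [Matrix.vecMul, dotProduct, blk] using this
  choose f hf using step1
  have hconst : ∀ q : ℤ, f q = f 0 := by
    intro q
    induction q using Int.induction_on with
    | zero => rfl
    | succ q ih => exact (step2 q _ _ (hf q) (hf (q+1))).symm.trans ih
    | pred q ih =>
        have e : (-(q : ℤ) - 1) + 1 = -q := by ring
        refine (step2 (-(q:ℤ)-1) _ _ (hf _) ?_).trans ih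
        rw [e]
        exact hf _
  refine ⟨f 0, fun c => ?_⟩
  have h := hf c 0
  rw [hconst c] at h
  simpa using h

include hSL htame in
lemma rows_comb : ∀ i : ℤ, ∃ φ : Fin (m+1) → K, ∀ c : ℤ,
    a i c = ∑ t, φ t * a ((t : ℤ)) c := by
  classical
  set P : ℤ → Prop := fun x => ∃ φ : Fin (m+1) → K, ∀ c : ℤ,
    a x c = ∑ t, φ t * a ((t : ℤ)) c with hP
  -- closure of P under linear combinations
  have comb : ∀ (y : ℤ) (z : ℤ) (μ : Fin (m+1) → K),
      (∀ s : Fin (m+1), P (z + (s : ℤ))) →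
      (∀ c, a y c = ∑ s, μ s * a (z + (s : ℤ)) c) → P y := by
    intro y z μ hPz hcomb
    choose Φ hΦ using hPz
    refine ⟨fun t => ∑ s, μ s * Φ s t, fun c => ?_⟩
    rw [hcomb c]
    calc ∑ s, μ s * a (z + (s : ℤ)) c
        = ∑ s, ∑ t, μ s * (Φ s t * a ((t : ℤ)) c) :=
          Finset.sum_congr rfl fun s _ => by rw [hΦ s c, Finset.mul_sum]
      _ = ∑ t, ∑ s, μ s * (Φ s t * a ((t : ℤ)) c) := Finset.sum_comm
      _ = ∑ t, (∑ s, μ s * Φ s t) * a ((t : ℤ)) c :=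
          Finset.sum_congr rfl fun t _ => by
            rw [Finset.sum_mul]
            exact Finset.sum_congr rfl fun s _ => by ring
  have base : ∀ t : Fin (m+1), P ((t : ℤ)) := by
    intro t
    refine ⟨Pi.single t 1, fun c => ?_⟩
    rw [Finset.sum_eq_single t]
    · simp
    · intro b _ hb
      simp [Pi.single_eq_of_ne hb]
    · simp
  set B : ℤ → Prop := fun i => ∀ t : ℕ, t < m + 1 → P (i + (t : ℤ)) with hB
  have hB0 : B 0 := by
    intro t ht
    have e : (0 : ℤ) + (t : ℤ) = ((⟨t, ht⟩ : Fin (m+1)) : ℤ) := by simp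
    rw [e]
    exact base _
  have hBup : ∀ i : ℤ, B i → B (i + 1) := by
    intro i hBi t ht
    by_cases h' : t + 1 < m + 1
    · have e : i + 1 + (t : ℤ) = i + ((t + 1 : ℕ) : ℤ) := by push_cast; ring
      rw [e]
      exact hBi (t+1) h'
    · have ht' : t = m := by omega
      obtain ⟨μ, hμ⟩ := rowUp m a hSL htame i
      have e : i + 1 + (t : ℤ) = i + ((m : ℤ) + 1) := by
        subst ht'; ring
      rw [e]
      refine comb _ i μ (fun s => hBi s (s.isLt)) ?_
      intro c
      exact hμ c
  have hBdown : ∀ i : ℤ, B i → B (i - 1) := by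
    intro i hBi t ht
    by_cases h' : 1 ≤ t
    · have e : i - 1 + (t : ℤ) = i + ((t - 1 : ℕ) : ℤ) := by
        push_cast [h']; ring
      rw [e]
      exact hBi (t-1) (by omega)
    · have ht' : t = 0 := by omega
      subst ht'
      obtain ⟨ν, hν⟩ := rowDown m a hSL htame (i - 1)
      have e : i - 1 + ((0:ℕ) : ℤ) = i - 1 := by simp
      rw [e]
      refine comb _ i ν (fun s => hBi s (s.isLt)) ?_
      intro c
      have e2 : i - 1 + 1 = i := by ring
      have := hν c
      rw [e2] at this
      exact this
  have hBall : ∀ i : ℤ, B i := by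
    intro i
    induction i using Int.induction_on with
    | zero => exact hB0
    | succ q ih => exact hBup q ih
    | pred q ih =>
        have e : -(q : ℤ) - 1 = -q - 1 := rfl
        exact e ▸ hBdown (-q) ih
  intro i
  have := hBall i 0 (by omega)
  simpa using this

include hSL htame in
lemma key (hone : ∀ i : ℤ, a i i = 1)
    (hone' : ∀ i : ℤ, a i (i + ((n : ℤ) + 1)) = 1)
    (hzero : ∀ i j : ℤ, i + ((n : ℤ) + 1) < j → j < i + ((n : ℤ) + (m : ℤ) + 2) → a i j = 0)
    (hext : ∀ i j : ℤ, a i (j + ((n : ℤ) + (m : ℤ) + 2)) = (-1 : K) ^ m * a i j)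
    (i j : ℤ) :
    (blk a m i j).det = (-1 : K) ^ m * a (j + (m : ℤ)) (i - 1) := by
  classical
  obtain ⟨φ, hφ⟩ : ∃ φ : ℤ → Fin (m+1) → K, ∀ (x : ℤ) (c : ℤ),
      a x c = ∑ t, φ x t * a ((t : ℤ)) c := by
    choose φ hφ using rows_comb m a hSL htame
    exact ⟨φ, hφ⟩
  set ridx : Fin (m+1) → ℤ := fun r => Fin.cases (j + (m : ℤ)) (fun r' : Fin m => i + (r' : ℤ)) r with hridx
  set cidx : Fin (m+1) → ℤ := fun s => Fin.cases (i - 1) (fun s' : Fin m => j + (s' : ℤ)) s with hcidx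
  set X : Matrix (Fin (m+1)) (Fin (m+1)) K := Matrix.of fun r t => φ (ridx r) t with hX
  set Y : Matrix (Fin (m+1)) (Fin (m+1)) K := Matrix.of fun t s => a ((t : ℤ)) (cidx s) with hY
  set E : Matrix (Fin (m+1)) (Fin (m+1)) K := Matrix.of fun r s => a (ridx r) (cidx s) with hE
  have hXY : X * Y = E := by
    ext r s
    simp only [Matrix.mul_apply, hX, hY, hE, Matrix.of_apply]
    exact (hφ (ridx r) (cidx s)).symm
  -- band values
  have hE0s : ∀ s' : Fin m, a (j + (m : ℤ)) (j + (s' : ℤ)) = 0 := by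
    intro s'
    have h1 : (1 : ℤ) ≤ (m : ℤ) - (s' : ℤ) := by
      have := s'.isLt; omega
    have h2 : (m : ℤ) - (s' : ℤ) ≤ (m : ℤ) := by
      have := s'.isLt; omega
    have hb := band m n a hzero hext (j + (m : ℤ)) ((m : ℤ) - (s' : ℤ)) h1 h2
    rw [show j + (m : ℤ) - ((m : ℤ) - (s' : ℤ)) = j + (s' : ℤ) from by ring] at hb
    exact hb
  have hEr0 : ∀ r' : Fin m, a (i + (r' : ℤ)) (i - 1) = 0 := by
    intro r'
    have hb := band m n a hzero hext (i + (r' : ℤ)) ((r' : ℤ) + 1)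
      (by omega) (by have := r'.isLt; omega)
    rw [show i + (r' : ℤ) - ((r' : ℤ) + 1) = i - 1 from by ring] at hb
    exact hb
  have hcornIV : a (i + (m : ℤ)) (i - 1) = (-1 : K) ^ m := by
    have hb := corner m n a hone' hext (i + (m : ℤ))
    rw [show i + (m : ℤ) - ((m : ℤ) + 1) = i - 1 from by ring] at hb
    exact hb
  -- the Phi matrix
  set Phi : Matrix (Fin (m+1)) (Fin (m+1)) K := Matrix.of fun r t => φ (i + (r : ℤ)) t with hPhi
  have hPhiMul : Phi * (blk a (m+1) 0 0) = blk a (m+1) i 0 := by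
    ext r s
    simp only [Matrix.mul_apply, hPhi, Matrix.of_apply, blk, zero_add]
    exact (hφ (i + (r : ℤ)) ((s : ℤ))).symm
  have hPhiDet : Phi.det = 1 := by
    have h1 := congrArg Matrix.det hPhiMul
    rw [Matrix.det_mul, hSL 0 0, hSL i 0, mul_one] at h1
    exact h1
  have hPhiUnit : IsUnit Phi.det := by rw [hPhiDet]; exact isUnit_one
  -- the rotation permutation
  set rot : Equiv.Perm (Fin (m+1)) := (finRotate (m+1)).symm with hrot
  have hrot0 : rot 0 = Fin.last m := by
    rw [hrot]
    exact (Equiv.symm_apply_eq _).mpr (finRotate_last).symm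
  have hrotsucc : ∀ r' : Fin m, rot r'.succ = r'.castSucc := by
    intro r'
    rw [hrot]
    refine (Equiv.symm_apply_eq _).mpr ?_
    rw [finRotate_succ_apply, Fin.coeSucc_eq_succ]
  have hsignrot : ((Equiv.Perm.sign rot : ℤ) : K) = (-1 : K) ^ m := by
    rw [hrot, Equiv.Perm.sign_symm, sign_finRotate]
    push_cast
    ring
    -- determinant of E
  have hsubE : E.submatrix Fin.succ Fin.succ = blk a m i j := by
    ext r' s'
    simp only [Matrix.submatrix_apply, hE, Matrix.of_apply, blk]
    congr 1 <;> simp [hridx, hcidx]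
  have detE : E.det = a (j + (m : ℤ)) (i - 1) * (blk a m i j).det := by
    rw [Matrix.det_succ_row_zero]
    rw [Finset.sum_eq_single 0]
    · rw [Fin.succAbove_zero, hsubE]
      simp [hE, hridx, hcidx]
    · intro s _ hs
      obtain ⟨s', rfl⟩ := Fin.exists_succ_eq.mpr hs
      have h0 : E 0 s'.succ = 0 := by
        simp only [hE, Matrix.of_apply]
        have e1 : ridx 0 = j + (m : ℤ) := by simp [hridx]
        have e2 : cidx s'.succ = j + (s' : ℤ) := by simp [hcidx]
        rw [e1, e2]
        exact hE0s s'
      rw [h0, mul_zero, zero_mul]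
    · intro h
      simp at h
  -- determinant of X
  have detX : X.det = a (j + (m : ℤ)) (i - 1) := by
    set f : (Fin (m+1) → K) →ₗ[K] K :=
      (LinearMap.proj (0 : Fin (m+1))).comp (Matrix.cramer Xᵀ) with hfdef
    have hf : ∀ x, f x = (X.updateRow 0 x).det := by
      intro x
      simp only [hfdef, LinearMap.comp_apply, LinearMap.proj_apply]
      exact Matrix.cramer_transpose_apply X x 0
    set g : (Fin (m+1) → K) →ₗ[K] K :=
      ∑ t : Fin (m+1), a ((t : ℤ)) (i - 1) • (LinearMap.proj t : (Fin (m+1) → K) →ₗ[K] K) with hgdef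
    have hg : ∀ x, g x = ∑ t : Fin (m+1), a ((t : ℤ)) (i - 1) * x t := by
      intro x
      simp [hgdef, LinearMap.sum_apply, LinearMap.proj_apply, smul_eq_mul]
    have hgφ : ∀ y : ℤ, g (φ y) = a y (i - 1) := by
      intro y
      rw [hg, hφ y (i - 1)]
      exact Finset.sum_congr rfl fun t _ => by ring
    have hfg : ∀ r, f (Phi r) = g (Phi r) := by
      intro r
      refine Fin.lastCases ?_ (fun r' => ?_) r
      · -- r = last
        have hPhiLast : (Phi (Fin.last m) : Fin (m+1) → K) = φ (i + (m : ℤ)) := by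
          funext t
          simp [hPhi, Fin.val_last]
        have hXrow : X.updateRow 0 (Phi (Fin.last m)) = Phi.submatrix rot id := by
          ext r'' t
          refine Fin.cases ?_ (fun r3 => ?_) r''
          · rw [Matrix.updateRow_self, Matrix.submatrix_apply, hrot0, id_eq]
          · rw [Matrix.updateRow_ne (Fin.succ_ne_zero r3), Matrix.submatrix_apply,
              hrotsucc r3, id_eq]
            simp [hX, hPhi, hridx]
        rw [hf, hXrow, Matrix.det_permute, hPhiDet, mul_one, hsignrot, hPhiLast, hgφ,
          hcornIV]
      · -- r = castSucc
        have hrow : (Phi (r'.castSucc) : Fin (m+1) → K) = φ (i + (r' : ℤ)) := by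
          funext t
          simp [hPhi]
        have hzero' : (X.updateRow 0 (Phi r'.castSucc)).det = 0 := by
          apply Matrix.det_zero_of_row_eq (Fin.succ_ne_zero r').symm
          rw [Matrix.updateRow_self, Matrix.updateRow_ne (Fin.succ_ne_zero r')]
          funext t
          simp [hrow, hX, hridx]
        rw [hf, hzero', hrow, hgφ]
        exact (hEr0 r').symm
    have hall := fun x => ext_on_rows Phi hPhiUnit f g hfg x
    have hX0 : (X 0 : Fin (m+1) → K) = φ (j + (m : ℤ)) := by
      funext t
      simp [hX, hridx]
    have : X.det = f (X 0) := by
      rw [hf, Matrix.updateRow_eq_self]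
    rw [this, hall, hX0, hgφ]
  -- determinant of Y
  have detY : Y.det = (-1 : K) ^ m * a (j + (m : ℤ)) (i - 1) := by
    set f' : (Fin (m+1) → K) →ₗ[K] K :=
      (LinearMap.proj (0 : Fin (m+1))).comp (Matrix.cramer Y) with hfdef'
    have hf' : ∀ x, f' x = (Y.updateCol 0 x).det := by
      intro x
      simp only [hfdef', LinearMap.comp_apply, LinearMap.proj_apply]
      exact Matrix.cramer_apply Y x 0
    set g' : (Fin (m+1) → K) →ₗ[K] K :=
      ∑ t : Fin (m+1), ((-1 : K) ^ m * φ (j + (m : ℤ)) t) • (LinearMap.proj t : (Fin (m+1) → K) →ₗ[K] K) with hgdef'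
    have hg' : ∀ x, g' x = (-1 : K) ^ m * ∑ t : Fin (m+1), φ (j + (m : ℤ)) t * x t := by
      intro x
      rw [Finset.mul_sum]
      simp [hgdef', LinearMap.sum_apply, LinearMap.proj_apply, smul_eq_mul, mul_assoc]
    set P' : Matrix (Fin (m+1)) (Fin (m+1)) K := (blk a (m+1) 0 j)ᵀ with hP'
    have hP'unit : IsUnit P'.det := by
      rw [hP', Matrix.det_transpose, hSL 0 j]
      exact isUnit_one
    have hP'row : ∀ s : Fin (m+1), (P' s : Fin (m+1) → K) = fun t : Fin (m+1) => a ((t : ℤ)) (j + (s : ℤ)) := by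
      intro s
      funext t
      simp [hP', Matrix.transpose_apply, blk, zero_add]
    have hfg' : ∀ s, f' (P' s) = g' (P' s) := by
      intro s
      refine Fin.lastCases ?_ (fun s' => ?_) s
      · -- s = last
        have hupd : Y.updateCol 0 (P' (Fin.last m)) = (blk a (m+1) 0 j).submatrix id rot := by
          ext t s''
          refine Fin.cases ?_ (fun s3 => ?_) s''
          · rw [Matrix.updateCol_self, Matrix.submatrix_apply, id_eq, hrot0]
            rw [hP'row]
            simp [blk, Fin.val_last]
          · rw [Matrix.updateCol_ne (Fin.succ_ne_zero s3), Matrix.submatrix_apply,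
              id_eq, hrotsucc s3]
            simp [hY, hcidx, blk, zero_add]
        rw [hf', hupd, Matrix.det_permute', hSL 0 j, mul_one, hsignrot, hg', hP'row]
        rw [← hφ (j + (m : ℤ)) (j + ((Fin.last m : Fin (m+1)) : ℤ))]
        rw [show j + ((Fin.last m : Fin (m+1)) : ℤ) = j + (m : ℤ) from by simp [Fin.val_last]]
        rw [hone (j + (m : ℤ)), mul_one]
      · -- s = castSucc
        have hzero' : (Y.updateCol 0 (P' s'.castSucc)).det = 0 := by
          apply Matrix.det_zero_of_column_eq (Fin.succ_ne_zero s').symm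
          intro t
          rw [Matrix.updateCol_self, Matrix.updateCol_ne (Fin.succ_ne_zero s')]
          rw [hP'row]
          simp [hY, hcidx]
        rw [hf', hzero', hg', hP'row]
        rw [show (((s'.castSucc : Fin (m+1))) : ℤ) = (s' : ℤ) from by simp]
        rw [← hφ (j + (m : ℤ)) (j + (s' : ℤ)), hE0s s', mul_zero]
    have hall' := fun x => ext_on_rows P' hP'unit f' g' hfg' x
    have hYcol : (fun t => Y t 0) = fun t : Fin (m+1) => a ((t : ℤ)) (i - 1) := by
      funext t
      simp [hY, hcidx]
    have : Y.det = f' (fun t => Y t 0) := by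
      rw [hf', Matrix.updateCol_eq_self]
    rw [this, hall', hYcol, hg']
    rw [← hφ (j + (m : ℤ)) (i - 1)]
  -- combine
  have hdetmul : X.det * Y.det = E.det := by rw [← hXY, Matrix.det_mul]
  by_cases hz : a (j + (m : ℤ)) (i - 1) = 0
  · rw [hz, mul_zero]
    have detY0 : Y.det = 0 := by rw [detY, hz, mul_zero]
    obtain ⟨c, hc0, hc⟩ := (Matrix.exists_mulVec_eq_zero_iff).2 detY0
    have hEc : E.mulVec c = 0 := by
      rw [← hXY, ← Matrix.mulVec_mulVec, hc, Matrix.mulVec_zero]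
    by_cases hc' : (c ∘ Fin.succ) = 0
    · exfalso
      have hc00 : c 0 ≠ 0 := by
        intro h00
        apply hc0
        funext r
        exact Fin.cases h00 (fun r' => congrFun hc' r') r
      have hcol : ∀ t : Fin (m+1), a ((t : ℤ)) (i - 1) = 0 := by
        intro t
        have h3 := congrFun hc t
        have h4 : ∑ s, Y t s * c s = 0 := by
          simpa [Matrix.mulVec, dotProduct] using h3
        rw [Fin.sum_univ_succ] at h4
        simp only [show ∀ s' : Fin m, c (Fin.succ s') = 0 from fun s' => congrFun hc' s',
          mul_zero, Finset.sum_const_zero, add_zero] at h4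
        have hY0 : Y t 0 = a ((t : ℤ)) (i - 1) := by simp [hY, hcidx]
        rw [hY0] at h4
        rcases mul_eq_zero.mp h4 with h | h
        · exact h
        · exact absurd h hc00
      have habs := hφ (i + (m : ℤ)) (i - 1)
      rw [hcornIV] at habs
      simp only [hcol, mul_zero, Finset.sum_const_zero] at habs
      exact absurd habs (pow_ne_zero _ (by norm_num))
    · have hDc : (blk a m i j).mulVec (c ∘ Fin.succ) = 0 := by
        funext r'
        have h3 := congrFun hEc (Fin.succ r')
        have h4 : ∑ s, E (Fin.succ r') s * c s = 0 := by
          simpa [Matrix.mulVec, dotProduct] using h3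
        rw [Fin.sum_univ_succ] at h4
        have hE00 : E (Fin.succ r') 0 = 0 := by
          have : E (Fin.succ r') 0 = a (i + (r' : ℤ)) (i - 1) := by
            simp [hE, hridx, hcidx]
          rw [this]
          exact hEr0 r'
        rw [hE00, zero_mul, zero_add] at h4
        have h5 : ((blk a m i j).mulVec (c ∘ Fin.succ)) r'
            = ∑ s' : Fin m, E (Fin.succ r') (Fin.succ s') * c (Fin.succ s') := by
          simp only [Matrix.mulVec, dotProduct, Function.comp_apply]
          refine Finset.sum_congr rfl fun s' _ => ?_
          have : E (Fin.succ r') (Fin.succ s') = blk a m i j r' s' := by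
            simp [hE, hridx, hcidx, blk]
          rw [this]
        rw [h5, h4]
        rfl
      have hdet0 : (blk a m i j).det = 0 :=
        Matrix.exists_mulVec_eq_zero_iff.1 ⟨_, hc', hDc⟩
      exact hdet0
  · rw [detX, detY, detE] at hdetmul
    exact (mul_left_cancel₀ hz hdetmul).symm

lemma modmap (m n : ℕ) (x : ℤ)
    (h1 : 1 ≤ x % ((n : ℤ) + (m : ℤ) + 2)) (h2 : x % ((n : ℤ) + (m : ℤ) + 2) ≤ (n : ℤ)) :
    1 ≤ (-x - ((m : ℤ) + 1)) % ((n : ℤ) + (m : ℤ) + 2) ∧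
      (-x - ((m : ℤ) + 1)) % ((n : ℤ) + (m : ℤ) + 2) ≤ (n : ℤ) := by
  set N : ℤ := (n : ℤ) + (m : ℤ) + 2 with hN
  set e : ℤ := x % N with he
  have hdvd : N ∣ (x - e) := by
    rw [he, Int.emod_def]
    exact ⟨x / N, by ring⟩
  have hmod : (-x - ((m : ℤ) + 1)) % N = ((n : ℤ) + 1 - e) % N := by
    have : (-x - ((m : ℤ) + 1)) ≡ ((n : ℤ) + 1 - e) [ZMOD N] := by
      rw [Int.modEq_iff_dvd]
      have harg : (n : ℤ) + 1 - e - (-x - ((m : ℤ) + 1)) = (x - e) + N := by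
        rw [hN]; ring
      rw [harg]
      exact dvd_add hdvd dvd_rfl
    exact this
  have hsmall : ((n : ℤ) + 1 - e) % N = (n : ℤ) + 1 - e := by
    apply Int.emod_eq_of_lt <;> omega
  constructor <;> omega

end RowRec

end TGIN


/-- The ℓ×ℓ adjacent minor of the array `a` at position `(i,j)`. -/
def adjMinor {K : Type*} [Field K] (a : ℤ → ℤ → K) (ℓ : ℕ) (i j : ℤ) : K :=
  Matrix.det (Matrix.of fun r s : Fin ℓ => a (i + (r : ℤ)) (j + (s : ℤ)))

/-- A tame SL_k-frieze is generic if and only if it is nonzero.  In the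
coordinates used here, row `i` has ones at columns `i` and `i+n+1`, zeros at the
`k-1` following columns, extension of period `n+k+1` with sign `(-1)^{k-1}`;
all adjacent `k×k` minors equal `1` and all adjacent `(k+1)×(k+1)` minors vanish.
Interior positions are those with `(j - i) mod (n+k+1) ∈ {1, …, n}`, and these
are also the positions at which the dual frieze of `(k-1)×(k-1)` minors is
interior.  The frieze is nonzero iff all its interior entries are nonzero, and
generic iff all the `(k-1)×(k-1)` minors at interior positions are nonzero. -/
theorem tame_generic_iff_nonzero {K : Type*} [Field K] (k n : ℕ) (hk : 2 ≤ k) (hn : 1 ≤ n)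
    (a : ℤ → ℤ → K)
    (hone : ∀ i : ℤ, a i i = 1)
    (hone' : ∀ i : ℤ, a i (i + ((n : ℤ) + 1)) = 1)
    (hzero : ∀ i j : ℤ, i + ((n : ℤ) + 1) < j → j < i + ((n : ℤ) + (k : ℤ) + 1) → a i j = 0)
    (hext : ∀ i j : ℤ, a i (j + ((n : ℤ) + (k : ℤ) + 1)) = (-1 : K) ^ (k - 1) * a i j)
    (hSL : ∀ i j : ℤ, adjMinor a k i j = 1)
    (htame : ∀ i j : ℤ, adjMinor a (k + 1) i j = 0) :
    ((∀ i j : ℤ, 1 ≤ (j - i) % ((n : ℤ) + (k : ℤ) + 1) →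
        (j - i) % ((n : ℤ) + (k : ℤ) + 1) ≤ (n : ℤ) → a i j ≠ 0) ↔
     (∀ i j : ℤ, 1 ≤ (j - i) % ((n : ℤ) + (k : ℤ) + 1) →
        (j - i) % ((n : ℤ) + (k : ℤ) + 1) ≤ (n : ℤ) → adjMinor a (k - 1) i j ≠ 0)) := by
  obtain ⟨m, rfl⟩ : ∃ m, k = m + 1 := ⟨k - 1, by omega⟩
  have hcast : ((m + 1 : ℕ) : ℤ) = (m : ℤ) + 1 := by push_cast; ring
  have hNe : (n : ℤ) + ((m + 1 : ℕ) : ℤ) + 1 = (n : ℤ) + (m : ℤ) + 2 := by push_cast; ring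
  have hz' : ∀ i j : ℤ, i + ((n : ℤ) + 1) < j → j < i + ((n : ℤ) + (m : ℤ) + 2) → a i j = 0 := by
    intro i j ha hb
    exact hzero i j ha (by omega)
  have he' : ∀ i j : ℤ, a i (j + ((n : ℤ) + (m : ℤ) + 2)) = (-1 : K) ^ m * a i j := by
    intro i j
    have := hext i j
    rw [hNe] at this
    simpa using this
  have hSL' : ∀ p q : ℤ, (TGIN.blk a (m+1) p q).det = 1 := hSL
  have htame' : ∀ p q : ℤ, (TGIN.blk a (m+2) p q).det = 0 := htame
  have hkey : ∀ i j : ℤ, adjMinor a m i j = (-1 : K) ^ m * a (j + (m : ℤ)) (i - 1) :=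
    TGIN.key m n a hSL' htame' hone hone' hz' he'
  have hmm : m + 1 - 1 = m := rfl
  constructor
  · intro hL i j h1 h2
    rw [hNe] at h1 h2
    rw [hmm, hkey i j]
    apply mul_ne_zero (pow_ne_zero _ (by norm_num))
    obtain ⟨c1, c2⟩ := TGIN.modmap m n (j - i) h1 h2
    have harg : (i - 1) - (j + (m : ℤ)) = -(j - i) - ((m : ℤ) + 1) := by ring
    apply hL
    · rw [hNe, harg]; exact c1
    · rw [hNe, harg]; exact c2
  · intro hR i j h1 h2
    rw [hNe] at h1 h2
    have hk2 := hkey (j + 1) (i - (m : ℤ))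
    rw [show i - (m : ℤ) + (m : ℤ) = i from by ring,
      show j + 1 - 1 = j from by ring] at hk2
    obtain ⟨c1, c2⟩ := TGIN.modmap m n (j - i) h1 h2
    have harg : (i - (m : ℤ)) - (j + 1) = -(j - i) - ((m : ℤ) + 1) := by ring
    have hD := hR (j + 1) (i - (m : ℤ)) (by rw [hNe, harg]; exact c1) (by rw [hNe, harg]; exact c2)
    rw [hmm] at hD
    intro ha0
    apply hD
    rw [hk2, ha0, mul_zero]
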